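/- In the public outcomes model, any proportionally fair outcome has group harm ratio 1: if o satisfies (1/n)·∑_i u_i(o')/u_i(o) ≤ 1 for all o' (with u_i(o) > 0 for all i), then there are no nonempty S, T ⊆ N and o' with (|S|/|S∪T|)·u_i(o') ≥ u_i(o) for all i ∈ S (one strict) and u_i(o') ≥ u_i(o) for all i ∉ S∪T. -/

import Mathlib

theorem pf_implies_ghr_one {O : Type*} {n : ℕ} (hn : 0 < n)
    (u : Fin n → O → ℝ) (hu : ∀ i o, 0 ≤ u i o)
    (o : O) (hpos : ∀ i, 0 < u i o)
    (hPF : ∀ o' : O, (1 / (n : ℝ)) * ∑ i, u i o' / u i o ≤ 1) :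
    ¬ ∃ (S T : Finset (Fin n)) (o' : O), S.Nonempty ∧ T.Nonempty ∧
        (∀ i ∈ S, ((S.card : ℝ) / (S ∪ T).card) * u i o' ≥ u i o) ∧
        (∃ i ∈ S, ((S.card : ℝ) / (S ∪ T).card) * u i o' > u i o) ∧
        (∀ i ∉ S ∪ T, u i o' ≥ u i o) := by
  rintro ⟨S, T, o', hS, hT, hge, ⟨j, hjS, hjgt⟩, hout⟩
  have hmpos : 0 < (S ∪ T).card :=
    Finset.card_pos.mpr (hS.mono Finset.subset_union_left)
  have hcpos : 0 < S.card := Finset.card_pos.mpr hS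
  set m : ℕ := (S ∪ T).card with hm
  set c : ℕ := S.card with hc
  have hmR : (0:ℝ) < m := by exact_mod_cast hmpos
  have hcR : (0:ℝ) < c := by exact_mod_cast hcpos
  have key : ∀ i ∈ S, (m : ℝ) / c ≤ u i o' / u i o := by
    intro i hi
    have h := hge i hi
    rw [ge_iff_le] at h
    rw [div_mul_eq_mul_div, le_div_iff₀ hmR] at h
    rw [div_le_div_iff₀ hcR (hpos i)]
    linarith
  have keyj : (m : ℝ) / c < u j o' / u j o := by
    have h := hjgt
    rw [gt_iff_lt, div_mul_eq_mul_div, lt_div_iff₀ hmR] at h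
    rw [div_lt_div_iff₀ hcR (hpos j)]
    linarith
  have hSsum : (m : ℝ) < ∑ i ∈ S, u i o' / u i o := by
    have := Finset.sum_lt_sum key ⟨j, hjS, keyj⟩
    have hconst : ∑ _i ∈ S, (m : ℝ) / c = m := by
      rw [Finset.sum_const, nsmul_eq_mul]
      field_simp
      rfl
    linarith [hconst ▸ this]
  have hUsum : (m : ℝ) < ∑ i ∈ S ∪ T, u i o' / u i o := by
    refine lt_of_lt_of_le hSsum (Finset.sum_le_sum_of_subset_of_nonneg
      Finset.subset_union_left ?_)
    intro i _ _
    exact div_nonneg (hu i o') (hpos i).le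
  have hCsum : ((n : ℝ) - m) ≤ ∑ i ∈ (S ∪ T)ᶜ, u i o' / u i o := by
    have h1 : ∀ i ∈ (S ∪ T)ᶜ, (1:ℝ) ≤ u i o' / u i o := by
      intro i hi
      rw [le_div_iff₀ (hpos i), one_mul]
      exact hout i (Finset.mem_compl.mp hi)
    calc ((n : ℝ) - m) = ((S ∪ T)ᶜ.card : ℝ) := by
          rw [Finset.card_compl]
          push_cast [Finset.card_le_univ (S ∪ T)]
          simp
          rfl
      _ = ∑ _i ∈ (S ∪ T)ᶜ, (1:ℝ) := by rw [Finset.sum_const, nsmul_eq_mul, mul_one]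
      _ ≤ _ := Finset.sum_le_sum h1
  have htot : (n : ℝ) < ∑ i, u i o' / u i o := by
    have := Finset.sum_add_sum_compl (S ∪ T) (fun i => u i o' / u i o)
    linarith
  have hnR : (0:ℝ) < n := by exact_mod_cast hn
  have := hPF o'
  rw [one_div, inv_mul_le_iff₀ hnR, mul_one] at this
  linarith
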